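/- Let ε > 0 and let f ∈ H^{1/2+ε}(𝕊) with Fourier coefficients (f̂_k). For N = 2n+1 odd, define the aliasing operator I_N(f) = ∑_{k=-n}^n (∑_{j∈ℤ} f̂_{k+jN}) z^k. Then ‖I_N(f)‖_{H^{1/2+ε}} ≤ C(ε) ‖f‖_{H^{1/2+ε}} with a constant C(ε) independent of N. -/

import Mathlib

open Complex Finset

/-- Cauchy–Schwarz for tsums over ℤ of nonnegative reals. -/
lemma my_tsum_cauchy_schwarz {f g : ℤ → ℝ} (hf0 : ∀ j, 0 ≤ f j) (hg0 : ∀ j, 0 ≤ g j)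
    (hf : Summable fun j => f j ^ 2) (hg : Summable fun j => g j ^ 2) :
    (∑' j, f j * g j) ^ 2 ≤ (∑' j, f j ^ 2) * ∑' j, g j ^ 2 := by
  have hfg : Summable fun j => f j * g j := by
    refine Summable.of_nonneg_of_le (fun j => mul_nonneg (hf0 j) (hg0 j))
      (fun j => ?_) ((hf.add hg).div_const 2)
    nlinarith [sq_nonneg (f j - g j)]
  have hA : 0 ≤ ∑' j, f j ^ 2 := tsum_nonneg fun j => sq_nonneg _
  have hB : 0 ≤ ∑' j, g j ^ 2 := tsum_nonneg fun j => sq_nonneg _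
  have key : ∑' j, f j * g j ≤ Real.sqrt (∑' j, f j ^ 2) * Real.sqrt (∑' j, g j ^ 2) := by
    refine Summable.tsum_le_of_sum_le hfg fun s => ?_
    have h1 : (∑ j ∈ s, f j * g j) ^ 2 ≤ (∑ j ∈ s, f j ^ 2) * ∑ j ∈ s, g j ^ 2 :=
      Finset.sum_mul_sq_le_sq_mul_sq s f g
    have h2 : (∑ j ∈ s, f j ^ 2) * ∑ j ∈ s, g j ^ 2 ≤ (∑' j, f j ^ 2) * ∑' j, g j ^ 2 :=
      mul_le_mul (Summable.sum_le_tsum s (fun j _ => sq_nonneg _) hf)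
        (Summable.sum_le_tsum s (fun j _ => sq_nonneg _) hg)
        (Finset.sum_nonneg fun j _ => sq_nonneg _) hA
    calc ∑ j ∈ s, f j * g j ≤ Real.sqrt ((∑ j ∈ s, f j * g j) ^ 2) := by
          rw [Real.sqrt_sq_eq_abs]; exact le_abs_self _
      _ ≤ Real.sqrt ((∑' j, f j ^ 2) * ∑' j, g j ^ 2) := Real.sqrt_le_sqrt (h1.trans h2)
      _ = _ := Real.sqrt_mul hA _
  calc (∑' j, f j * g j) ^ 2
      ≤ (Real.sqrt (∑' j, f j ^ 2) * Real.sqrt (∑' j, g j ^ 2)) ^ 2 :=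
        pow_le_pow_left₀ (tsum_nonneg fun j => mul_nonneg (hf0 j) (hg0 j)) key 2
    _ = _ := by rw [mul_pow, Real.sq_sqrt hA, Real.sq_sqrt hB]

lemma my_key_ineq (n N : ℕ) (hN : (N:ℤ) = 2*n+1) (k j : ℤ)
    (hk : k ∈ Finset.Icc (-(n:ℤ)) (n:ℤ)) (hj : j ≠ 0) :
    (1 + (k:ℝ)^2) * (j:ℝ)^2 ≤ 1 + ((k + j * N : ℤ) : ℝ)^2 := by
  simp only [Finset.mem_Icc] at hk
  obtain ⟨hk1, hk2⟩ := hk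
  have hz : (1 + k^2) * j^2 ≤ 1 + (k + j * (N:ℤ))^2 := by
    rw [hN]
    have hprod : 0 ≤ (k + j*(n:ℤ)) * (k + j*(3*(n:ℤ)+2)) := by
      rcases lt_or_gt_of_ne hj with h | h
      · have h1 : j ≤ -1 := by omega
        have ha : k + j*(n:ℤ) ≤ 0 := by nlinarith [Int.natCast_nonneg n]
        have hb : k + j*(3*(n:ℤ)+2) ≤ 0 := by nlinarith [Int.natCast_nonneg n]
        nlinarith [mul_nonneg (neg_nonneg.mpr ha) (neg_nonneg.mpr hb)]
      · have h1 : 1 ≤ j := by omega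
        have ha : 0 ≤ k + j*(n:ℤ) := by nlinarith [Int.natCast_nonneg n]
        have hb : 0 ≤ k + j*(3*(n:ℤ)+2) := by nlinarith [Int.natCast_nonneg n]
        exact mul_nonneg ha hb
    have h2 : 0 ≤ j^2 * ((n:ℤ)^2 + 2*(n:ℤ) - k^2) := by
      have hkn : k^2 ≤ (n:ℤ)^2 := sq_le_sq' (by linarith) hk2
      apply mul_nonneg (sq_nonneg j); nlinarith [Int.natCast_nonneg n]
    nlinarith [hprod, h2]
  calc (1 + (k:ℝ)^2) * (j:ℝ)^2 = (((1 + k^2) * j^2 : ℤ) : ℝ) := by push_cast; ring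
    _ ≤ ((1 + (k + j * (N:ℤ))^2 : ℤ) : ℝ) := by exact_mod_cast Int.cast_le.mpr hz
    _ = _ := by push_cast; ring

lemma my_sq_rpow (ε : ℝ) (x : ℝ) : (x^2) ^ (-((1+2*ε)/2)) = |x| ^ (-(1+2*ε)) := by
  rw [← _root_.sq_abs x, ← Real.rpow_natCast |x| 2, ← Real.rpow_mul (abs_nonneg x)]
  congr 1
  push_cast
  ring

/-- Uniform boundedness of the aliasing operator `I_N` on `H^{1/2+ε}(𝕊)`:
in terms of Fourier coefficients `a : ℤ → ℂ` with `∑ ⟨k⟩^{1+2ε}|a_k|² < ∞`,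
the folded coefficients `A_k = ∑_{j∈ℤ} a_{k+jN}` (for `|k| ≤ n`, `N = 2n+1`)
satisfy `∑_{|k|≤n} ⟨k⟩^{1+2ε}|A_k|² ≤ C(ε) ∑_k ⟨k⟩^{1+2ε}|a_k|²`, with `C(ε)`
independent of `N`. -/
theorem aliasing_bounded (ε : ℝ) (hε : 0 < ε) :
    ∃ C : ℝ, 0 < C ∧ ∀ (n N : ℕ), N = 2 * n + 1 →
      ∀ a : ℤ → ℂ,
        Summable (fun k : ℤ => (1 + (k : ℝ) ^ 2) ^ ((1 + 2 * ε) / 2) * (‖a k‖) ^ 2) →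
        ∑ k ∈ Finset.Icc (-(n : ℤ)) (n : ℤ),
            (1 + (k : ℝ) ^ 2) ^ ((1 + 2 * ε) / 2) *
              (‖∑' j : ℤ, a (k + j * N)‖) ^ 2 ≤
          C * ∑' k : ℤ, (1 + (k : ℝ) ^ 2) ^ ((1 + 2 * ε) / 2) * (‖a k‖) ^ 2 := by
  classical
  have hexp : (1:ℝ) < 1 + 2*ε := by linarith
  set b : ℤ → ℝ := fun j => (if j = 0 then (1:ℝ) else 0) + |(j:ℝ)| ^ (-(1+2*ε)) with hb_def
  have hb_nonneg : ∀ j, 0 ≤ b j := fun j =>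
    add_nonneg (by split <;> norm_num) (Real.rpow_nonneg (abs_nonneg _) _)
  have hb_sum : Summable b := by
    apply Summable.add
    · apply summable_of_ne_finset_zero (s := ({0} : Finset ℤ))
      intro j hj
      simp only [Finset.mem_singleton] at hj
      simp [hj]
    · exact Real.summable_abs_int_rpow hexp
  have hb0 : b 0 = 1 := by
    have h0 : (-(1+2*ε) : ℝ) ≠ 0 := by
      have : (0:ℝ) < 1 + 2*ε := by linarith
      exact neg_ne_zero.mpr this.ne'
    rw [hb_def]
    simp only [if_pos rfl, if_true, Int.cast_zero, abs_zero, Real.zero_rpow h0, add_zero]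
  set C : ℝ := ∑' j, b j with hC_def
  have hC1 : (1:ℝ) ≤ C := hb0 ▸ Summable.le_tsum hb_sum 0 (fun j _ => hb_nonneg j)
  refine ⟨C, by linarith, ?_⟩
  intro n N hN a ha
  set w : ℤ → ℝ := fun k => (1 + (k:ℝ)^2) ^ ((1+2*ε)/2) with hw_def
  set g : ℤ → ℝ := fun k => w k * (‖a k‖)^2 with hg_def
  have hw_pos : ∀ k : ℤ, 0 < w k := fun k => Real.rpow_pos_of_pos (by positivity) _
  have hg_nonneg : ∀ m, 0 ≤ g m := fun m => mul_nonneg (hw_pos m).le (sq_nonneg _)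
  have hg_sum : Summable g := ha
  have hNZ : (N:ℤ) = 2*(n:ℤ)+1 := by exact_mod_cast congrArg (Nat.cast : ℕ → ℤ) hN
  have hNpos : (0:ℤ) < (N:ℤ) := by omega
  -- (w m)⁻¹ ≤ b m
  have hwinv_le_b : ∀ m : ℤ, (w m)⁻¹ ≤ b m := by
    intro m
    by_cases hm : m = 0
    · subst hm
      have : w 0 = 1 := by simp [hw_def]
      rw [this, hb0, inv_one]
    · have hm2 : (0:ℝ) < (m:ℝ)^2 := by
        have : (m:ℝ) ≠ 0 := Int.cast_ne_zero.mpr hm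
        positivity
      have h1 : (w m)⁻¹ = (1 + (m:ℝ)^2) ^ (-((1+2*ε)/2)) := by
        rw [hw_def]; exact (Real.rpow_neg (by positivity) _).symm
      have h2 : (1 + (m:ℝ)^2) ^ (-((1+2*ε)/2)) ≤ ((m:ℝ)^2) ^ (-((1+2*ε)/2)) := by
        apply Real.rpow_le_rpow_of_nonpos hm2 (by linarith) (by linarith)
      rw [h1, hb_def]
      simp only [hm, if_neg, if_false]
      calc (1 + (m:ℝ)^2) ^ (-((1+2*ε)/2)) ≤ ((m:ℝ)^2) ^ (-((1+2*ε)/2)) := h2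
        _ = |(m:ℝ)| ^ (-(1+2*ε)) := my_sq_rpow ε _
        _ ≤ 0 + |(m:ℝ)| ^ (-(1+2*ε)) := by rw [zero_add]
  have hwinv_sum : Summable fun m : ℤ => (w m)⁻¹ :=
    Summable.of_nonneg_of_le (fun m => (inv_pos.mpr (hw_pos m)).le) hwinv_le_b hb_sum
  -- summability of |a|
  have habs_sum : Summable fun m : ℤ => ‖a m‖ := by
    refine Summable.of_nonneg_of_le (fun m => norm_nonneg _) (fun m => ?_)
      ((hg_sum.add hwinv_sum).div_const 2)
    have hW := hw_pos m
    have hWi : w m * (w m)⁻¹ = 1 := mul_inv_cancel₀ hW.ne'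
    rw [le_div_iff₀ (by norm_num : (0:ℝ) < 2)]
    have h2 : (‖a m‖ * 2) * w m ≤ (g m + (w m)⁻¹) * w m := by
      simp only [hg_def]
      nlinarith [sq_nonneg (w m * ‖a m‖ - 1), hW, hWi]
    exact le_of_mul_le_mul_right h2 hW
  -- injectivity of j ↦ k + j * N
  have hinj : ∀ k : ℤ, Function.Injective (fun j : ℤ => k + j * (N:ℤ)) := by
    intro k j j' h
    simp only at h
    have h' : j * (N:ℤ) = j' * N := by omega
    exact mul_right_cancel₀ (by omega : (N:ℤ) ≠ 0) h'
  have hS1 : ∀ k : ℤ, Summable fun j : ℤ => (w (k + j * N))⁻¹ := fun k =>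
    hwinv_sum.comp_injective (hinj k)
  have hS2 : ∀ k : ℤ, Summable fun j : ℤ => g (k + j * N) := fun k =>
    hg_sum.comp_injective (hinj k)
  have hS3 : ∀ k : ℤ, Summable fun j : ℤ => ‖a (k + j * N)‖ := fun k =>
    habs_sum.comp_injective (hinj k)
  -- per-k bound
  have hkbound : ∀ k ∈ Finset.Icc (-(n:ℤ)) (n:ℤ),
      w k * (‖∑' j : ℤ, a (k + j * N)‖)^2 ≤ C * ∑' j : ℤ, g (k + j * N) := by
    intro k hk
    have habs : ‖∑' j : ℤ, a (k + j * N)‖ ≤ ∑' j : ℤ, ‖a (k + j * N)‖ := by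
      simpa using
        norm_tsum_le_tsum_norm (f := fun j : ℤ => a (k + j * N))
          (by simpa using hS3 k)
    -- Cauchy-Schwarz
    have hCS : (∑' j : ℤ, ‖a (k + j * N)‖)^2 ≤
        (∑' j : ℤ, (w (k + j * N))⁻¹) * ∑' j : ℤ, g (k + j * N) := by
      have hf0 : ∀ j : ℤ, 0 ≤ Real.sqrt ((w (k + j * N))⁻¹) := fun j => Real.sqrt_nonneg _
      have hg0 : ∀ j : ℤ, 0 ≤ Real.sqrt (w (k + j * N)) * ‖a (k + j * N)‖ :=
        fun j => mul_nonneg (Real.sqrt_nonneg _) (norm_nonneg _)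
      have hfs : ∀ j : ℤ, Real.sqrt ((w (k + j * N))⁻¹) ^ 2 = (w (k + j * N))⁻¹ :=
        fun j => Real.sq_sqrt (inv_pos.mpr (hw_pos _)).le
      have hgs : ∀ j : ℤ, (Real.sqrt (w (k + j * N)) * ‖a (k + j * N)‖) ^ 2
          = g (k + j * N) := by
        intro j
        rw [mul_pow, Real.sq_sqrt (hw_pos _).le, hg_def]
      have hmul : ∀ j : ℤ, Real.sqrt ((w (k + j * N))⁻¹) *
          (Real.sqrt (w (k + j * N)) * ‖a (k + j * N)‖)
          = ‖a (k + j * N)‖ := by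
        intro j
        rw [← mul_assoc, ← Real.sqrt_mul (inv_pos.mpr (hw_pos _)).le,
          inv_mul_cancel₀ (hw_pos _).ne', Real.sqrt_one, one_mul]
      have := my_tsum_cauchy_schwarz hf0 hg0
        ((hS1 k).congr fun j => (hfs j).symm)
        ((hS2 k).congr fun j => (hgs j).symm)
      calc (∑' j : ℤ, ‖a (k + j * N)‖)^2
          = (∑' j : ℤ, Real.sqrt ((w (k + j * N))⁻¹) *
              (Real.sqrt (w (k + j * N)) * ‖a (k + j * N)‖))^2 := by
            rw [tsum_congr hmul]
        _ ≤ (∑' j : ℤ, Real.sqrt ((w (k + j * N))⁻¹) ^ 2) *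
            ∑' j : ℤ, (Real.sqrt (w (k + j * N)) * ‖a (k + j * N)‖) ^ 2 := this
        _ = _ := by rw [tsum_congr hfs, tsum_congr hgs]
    -- the weight factor bound
    have hwt : w k * ∑' j : ℤ, (w (k + j * N))⁻¹ ≤ C := by
      rw [← tsum_mul_left]
      refine Summable.tsum_le_tsum (fun j => ?_) ((hS1 k).mul_left _) hb_sum
      by_cases hj : j = 0
      · subst hj
        simp only [zero_mul, add_zero]
        rw [mul_inv_cancel₀ (hw_pos k).ne', hb0]
      · have hj2 : (0:ℝ) < (j:ℝ)^2 := by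
          have : (j:ℝ) ≠ 0 := Int.cast_ne_zero.mpr hj
          positivity
        have hjσ : (0:ℝ) < ((j:ℝ)^2) ^ ((1+2*ε)/2) := Real.rpow_pos_of_pos hj2 _
        have hm : ((1 + (k:ℝ)^2) * (j:ℝ)^2) ^ ((1+2*ε)/2) ≤ w (k + j * N) := by
          simp only [hw_def]
          refine Real.rpow_le_rpow (by positivity) ?_ (by linarith)
          have := my_key_ineq n N hNZ k j hk hj
          push_cast at this ⊢
          convert this using 2
        have hgoal : w k * (w (k + j * N))⁻¹ ≤ 1 / ((j:ℝ)^2) ^ ((1+2*ε)/2) := by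
          rw [← div_eq_mul_inv, div_le_div_iff₀ (hw_pos _) hjσ, one_mul]
          calc w k * ((j:ℝ)^2) ^ ((1+2*ε)/2)
              = ((1 + (k:ℝ)^2) * (j:ℝ)^2) ^ ((1+2*ε)/2) := by
                simp only [hw_def]
                exact (Real.mul_rpow (by positivity) (sq_nonneg _)).symm
            _ ≤ w (k + j * N) := hm
        calc w k * (w (k + j * N))⁻¹ ≤ 1 / ((j:ℝ)^2) ^ ((1+2*ε)/2) := hgoal
          _ = ((j:ℝ)^2) ^ (-((1+2*ε)/2)) := by
              rw [one_div, Real.rpow_neg hj2.le]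
          _ = |(j:ℝ)| ^ (-(1+2*ε)) := my_sq_rpow ε _
          _ = b j := by simp [hb_def, hj]
    -- combine
    have hT0 : 0 ≤ ∑' j : ℤ, g (k + j * N) := tsum_nonneg fun j => hg_nonneg _
    have hW0 : 0 ≤ ∑' j : ℤ, (w (k + j * N))⁻¹ := tsum_nonneg fun j => (inv_pos.mpr (hw_pos _)).le
    calc w k * (‖∑' j : ℤ, a (k + j * N)‖)^2
        ≤ w k * ((∑' j : ℤ, (w (k + j * N))⁻¹) * ∑' j : ℤ, g (k + j * N)) := by
          refine mul_le_mul_of_nonneg_left ?_ (hw_pos k).le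
          calc (‖∑' j : ℤ, a (k + j * N)‖)^2
              ≤ (∑' j : ℤ, ‖a (k + j * N)‖)^2 :=
                pow_le_pow_left₀ (norm_nonneg _) habs 2
            _ ≤ _ := hCS
      _ = (w k * ∑' j : ℤ, (w (k + j * N))⁻¹) * ∑' j : ℤ, g (k + j * N) := by ring
      _ ≤ C * ∑' j : ℤ, g (k + j * N) := mul_le_mul_of_nonneg_right hwt hT0
  -- sum over k and repartition
  show ∑ k ∈ Finset.Icc (-(n:ℤ)) (n:ℤ), w k * (‖∑' j : ℤ, a (k + j * N)‖)^2
      ≤ C * ∑' k : ℤ, g k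
  have hE : Function.Injective
      (fun p : (Finset.Icc (-(n:ℤ)) (n:ℤ) : Finset ℤ) × ℤ => (p.1 : ℤ) + p.2 * (N:ℤ)) := by
    rintro ⟨⟨k, hk⟩, j⟩ ⟨⟨k', hk'⟩, j'⟩ h
    simp only at h
    have hk1 := Finset.mem_Icc.mp hk
    have hk2 := Finset.mem_Icc.mp hk'
    by_cases hjj : j = j'
    · subst hjj
      have : k = k' := by omega
      simp [this]
    · exfalso
      have hd : (j - j') * (N:ℤ) = k' - k := by linarith [h, sub_mul j j' (N:ℤ)]
      have h1 : 1 ≤ |j - j'| := Int.one_le_abs (sub_ne_zero.mpr hjj)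
      have h2 : (N:ℤ) ≤ |(j - j') * (N:ℤ)| := by
        rw [abs_mul, abs_of_nonneg hNpos.le]
        nlinarith
      rw [hd] at h2
      have h3 : |k' - k| ≤ 2*(n:ℤ) := abs_le.mpr ⟨by omega, by omega⟩
      omega
  have hsum_prod : Summable (fun p : (Finset.Icc (-(n:ℤ)) (n:ℤ) : Finset ℤ) × ℤ =>
      g ((p.1 : ℤ) + p.2 * (N:ℤ))) := hg_sum.comp_injective hE
  have h5 : ∑' p : (Finset.Icc (-(n:ℤ)) (n:ℤ) : Finset ℤ) × ℤ, g ((p.1 : ℤ) + p.2 * (N:ℤ))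
      = ∑ k ∈ Finset.Icc (-(n:ℤ)) (n:ℤ), ∑' j : ℤ, g (k + j * N) := by
    rw [Summable.tsum_prod' hsum_prod (fun b => hg_sum.comp_injective (hinj b))]
    rw [tsum_fintype]
    exact Finset.sum_coe_sort (Finset.Icc (-(n:ℤ)) (n:ℤ)) (fun k => ∑' j : ℤ, g (k + j * (N:ℤ)))
  have h6 : ∑' p : (Finset.Icc (-(n:ℤ)) (n:ℤ) : Finset ℤ) × ℤ, g ((p.1 : ℤ) + p.2 * (N:ℤ))
      ≤ ∑' m : ℤ, g m :=
    Summable.tsum_le_tsum_of_inj _ hE (fun c _ => hg_nonneg c) (fun p => le_rfl) hsum_prod hg_sum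
  calc ∑ k ∈ Finset.Icc (-(n:ℤ)) (n:ℤ), w k * (‖∑' j : ℤ, a (k + j * N)‖)^2
      ≤ ∑ k ∈ Finset.Icc (-(n:ℤ)) (n:ℤ), C * ∑' j : ℤ, g (k + j * N) :=
        Finset.sum_le_sum hkbound
    _ = C * ∑ k ∈ Finset.Icc (-(n:ℤ)) (n:ℤ), ∑' j : ℤ, g (k + j * N) := by
        rw [Finset.mul_sum]
    _ ≤ C * ∑' m : ℤ, g m := by
        refine mul_le_mul_of_nonneg_left ?_ (by linarith : (0:ℝ) ≤ C)
        rw [← h5]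
        exact h6
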